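/- For every integer n ≥ 2, every minimal Markov basis for A_{n,2} contains exactly C(n,3) moves of degree three, where C(n,3) denotes the binomial coefficient n choose 3. -/

import Mathlib

/-- The sufficient-statistic map (configuration matrix `A_{n,r}` applied to a
nonnegative integer vector indexed by `S_{n,r}`, the injections from `Fin r` to `Fin n`):
the `(j,k)` coordinate counts, with multiplicity `x σ`, the votes `σ` with `σ j = k`. -/
noncomputable def suffN (n r : ℕ) (x : (Fin r ↪ Fin n) → ℕ) : Fin r × Fin n → ℕ :=
  fun p => ∑ σ : Fin r ↪ Fin n, if σ p.1 = p.2 then x σ else 0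

/-- The configuration matrix `A_{n,r}` applied to an integer vector. -/
noncomputable def suffZ (n r : ℕ) (z : (Fin r ↪ Fin n) → ℤ) : Fin r × Fin n → ℤ :=
  fun p => ∑ σ : Fin r ↪ Fin n, if σ p.1 = p.2 then z σ else 0

/-- The degree of a move `z`: `Σ_σ max(z σ, 0)`. -/
noncomputable def moveDeg (n r : ℕ) (z : (Fin r ↪ Fin n) → ℤ) : ℕ :=
  ∑ σ : Fin r ↪ Fin n, (z σ).toNat

/-- `B` is a Markov basis for `A_{n,r}`: a finite set of moves (elements of the integer
kernel of `A_{n,r}`) such that any two points of a common fiber are connected by a path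
staying in the fiber whose steps are elements of `B ∪ (-B)`. -/
def IsMarkovBasis (n r : ℕ) (B : Finset ((Fin r ↪ Fin n) → ℤ)) : Prop :=
  (∀ z ∈ B, suffZ n r z = 0) ∧
  ∀ x y : (Fin r ↪ Fin n) → ℕ, suffN n r x = suffN n r y →
    ∃ (m : ℕ) (w : ℕ → (Fin r ↪ Fin n) → ℕ),
      w 0 = x ∧ w m = y ∧
      (∀ i ≤ m, suffN n r (w i) = suffN n r x) ∧
      (∀ i < m, (fun σ => (w (i+1) σ : ℤ) - (w i σ : ℤ)) ∈ B ∨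
                (fun σ => (w i σ : ℤ) - (w (i+1) σ : ℤ)) ∈ B)


section basics
variable {n r : ℕ}

/-- the vote (a,b) -/
def Vt {n : ℕ} (a b : Fin n) (h : a ≠ b) : Fin 2 ↪ Fin n :=
  ⟨![a, b], by
    intro i j hij
    fin_cases i <;> fin_cases j <;> simp_all [Matrix.cons_val_zero, Matrix.cons_val_one]⟩

@[simp] lemma Vt_zero {a b : Fin n} (h : a ≠ b) : Vt a b h 0 = a := rfl
@[simp] lemma Vt_one {a b : Fin n} (h : a ≠ b) : Vt a b h 1 = b := rfl

lemma emb_ext {σ τ : Fin 2 ↪ Fin n} (h0 : σ 0 = τ 0) (h1 : σ 1 = τ 1) : σ = τ := by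
  ext i
  match i with
  | 0 => exact congrArg Fin.val h0
  | 1 => exact congrArg Fin.val h1

/-- indicator of a single vote -/
def ind {n r : ℕ} (v : Fin r ↪ Fin n) : (Fin r ↪ Fin n) → ℕ := fun σ => if σ = v then 1 else 0

/-- indicator of the vote (a,b) (zero if a = b) -/
def E {n : ℕ} (a b : Fin n) : (Fin 2 ↪ Fin n) → ℕ :=
  fun σ => if σ 0 = a ∧ σ 1 = b then 1 else 0

lemma E_eq_ind {a b : Fin n} (h : a ≠ b) : E a b = ind (Vt a b h) := by
  funext σ
  unfold E ind
  congr 1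
  simp only [eq_iff_iff]
  constructor
  · rintro ⟨h0, h1⟩; exact emb_ext (by simpa) (by simpa)
  · rintro rfl; exact ⟨rfl, rfl⟩

@[simp] lemma E_apply_self {a b : Fin n} (h : a ≠ b) : E a b (Vt a b h) = 1 := by
  simp [E]

lemma suffN_add (x y : (Fin r ↪ Fin n) → ℕ) :
    suffN n r (x + y) = suffN n r x + suffN n r y := by
  funext p
  simp only [suffN, Pi.add_apply, ← Finset.sum_add_distrib]
  exact Finset.sum_congr rfl fun σ _ => by split <;> simp

lemma suffN_ind (v : Fin r ↪ Fin n) :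
    suffN n r (ind v) = fun p => if v p.1 = p.2 then 1 else 0 := by
  funext p
  unfold suffN ind
  rw [Finset.sum_eq_single v]
  · simp
  · intro τ _ hτ; simp [hτ]
  · simp

lemma suffN_E {a b : Fin n} (h : a ≠ b) :
    suffN n 2 (E a b) = fun p => if Vt a b h p.1 = p.2 then 1 else 0 := by
  rw [E_eq_ind h, suffN_ind]

lemma sum_ind (v : Fin r ↪ Fin n) : (∑ σ : Fin r ↪ Fin n, ind v σ) = 1 := by
  unfold ind
  rw [Finset.sum_eq_single v] <;> simp

/-- total size is determined by the sufficient statistic -/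
lemma sum_eq_sum_suffN (hr : 0 < r) (x : (Fin r ↪ Fin n) → ℕ) :
    (∑ σ : Fin r ↪ Fin n, x σ) = ∑ k : Fin n, suffN n r x (⟨0, hr⟩, k) := by
  unfold suffN
  rw [Finset.sum_comm]
  exact Finset.sum_congr rfl fun σ _ => by simp

end basics


lemma ms2 {α : Type*} (a b a' b' : α) (h : ({a, b} : Multiset α) = {a', b'}) :
    (a = a' ∧ b = b') ∨ (a = b' ∧ b = a') := by
  simp only [Multiset.insert_eq_cons, Multiset.cons_eq_cons] at h
  rcases h with ⟨rfl, h⟩ | ⟨hne, cs, h1, h2⟩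
  · left; exact ⟨rfl, by simpa using h⟩
  · have : cs = 0 := by
      have := congrArg Multiset.card h1
      simpa using this
    subst this
    simp only [Multiset.singleton_eq_cons_iff] at h1 h2
    exact Or.inr ⟨h2.1.symm, h1.1⟩

lemma ms3 {α : Type*} (a b c a' b' c' : α) (h : ({a, b, c} : Multiset α) = {a', b', c'}) :
    (a = a' ∧ ((b = b' ∧ c = c') ∨ (b = c' ∧ c = b'))) ∨
    (a = b' ∧ ((b = a' ∧ c = c') ∨ (b = c' ∧ c = a'))) ∨
    (a = c' ∧ ((b = a' ∧ c = b') ∨ (b = b' ∧ c = a'))) := by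
  simp only [Multiset.insert_eq_cons] at h
  rw [Multiset.cons_eq_cons] at h
  rcases h with ⟨rfl, h⟩ | ⟨hne, cs, h1, h2⟩
  · exact Or.inl ⟨rfl, ms2 _ _ _ _ (by simpa [Multiset.insert_eq_cons] using h)⟩
  · obtain ⟨d, rfl⟩ : ∃ d, cs = {d} := by
      rw [Multiset.card_eq_one.symm]
      have := congrArg Multiset.card h1
      simpa using this
    have hbc : (b = a' ∧ c = d) ∨ (b = d ∧ c = a') :=
      ms2 _ _ _ _ (by simpa [Multiset.insert_eq_cons] using h1)
    have hbc' : (b' = a ∧ c' = d) ∨ (b' = d ∧ c' = a) :=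
      ms2 _ _ _ _ (by simpa [Multiset.insert_eq_cons] using h2)
    rcases hbc with ⟨rfl, rfl⟩ | ⟨rfl, rfl⟩ <;> rcases hbc' with ⟨rfl, rfl⟩ | ⟨rfl, rfl⟩ <;> tauto


section paths
variable {n r : ℕ}

lemma suffZ_diff (p q : (Fin r ↪ Fin n) → ℕ) :
    suffZ n r (fun σ => (q σ : ℤ) - p σ) =
      fun pr => (suffN n r q pr : ℤ) - suffN n r p pr := by
  funext pr
  simp only [suffZ, suffN, Nat.cast_sum]
  rw [← Finset.sum_sub_distrib]
  exact Finset.sum_congr rfl fun σ _ => by split <;> simp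

lemma suffN_eq_of_diff {p q : (Fin r ↪ Fin n) → ℕ}
    (h : suffZ n r (fun σ => (q σ : ℤ) - p σ) = 0) : suffN n r p = suffN n r q := by
  funext pr
  have := congrFun (suffZ_diff p q ▸ h) pr
  simp only [Pi.zero_apply, sub_eq_zero] at this
  exact_mod_cast this.symm

/-- one allowed step: the difference (in either direction) belongs to B -/
def Bstep (n r : ℕ) (B : Finset ((Fin r ↪ Fin n) → ℤ)) (p q : (Fin r ↪ Fin n) → ℕ) : Prop :=
  (fun σ => (q σ : ℤ) - p σ) ∈ B ∨ (fun σ => (p σ : ℤ) - q σ) ∈ B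

lemma Bstep_symm {B : Finset ((Fin r ↪ Fin n) → ℤ)} {p q} (h : Bstep n r B p q) :
    Bstep n r B q p := h.symm

lemma Bstep_suff {B : Finset ((Fin r ↪ Fin n) → ℤ)} (hker : ∀ z ∈ B, suffZ n r z = 0)
    {p q} (h : Bstep n r B p q) : suffN n r p = suffN n r q := by
  rcases h with h | h
  · exact suffN_eq_of_diff (hker _ h)
  · exact (suffN_eq_of_diff (hker _ h)).symm

def Conn (n r : ℕ) (B : Finset ((Fin r ↪ Fin n) → ℤ)) :
    ((Fin r ↪ Fin n) → ℕ) → ((Fin r ↪ Fin n) → ℕ) → Prop :=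
  Relation.ReflTransGen (Bstep n r B)

lemma Conn_symm {B : Finset ((Fin r ↪ Fin n) → ℤ)} {p q} (h : Conn n r B p q) :
    Conn n r B q p := by
  induction h with
  | refl => exact Relation.ReflTransGen.refl
  | tail _ hstep ih => exact Relation.ReflTransGen.head (Bstep_symm hstep) ih

lemma Conn_shift {B : Finset ((Fin r ↪ Fin n) → ℤ)} (s : (Fin r ↪ Fin n) → ℕ) {p q}
    (h : Conn n r B p q) : Conn n r B (s + p) (s + q) := by
  induction h with
  | refl => exact Relation.ReflTransGen.refl
  | tail _ hstep ih =>
      refine ih.tail ?_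
      rcases hstep with h | h
      · left; convert h using 1; funext σ; show ((_:ℕ):ℤ) - ((_:ℕ):ℤ) = _; push_cast [Pi.add_apply]; ring
      · right; convert h using 1; funext σ; show ((_:ℕ):ℤ) - ((_:ℕ):ℤ) = _; push_cast [Pi.add_apply]; ring

/-- from the Markov-basis path format to `Conn` -/
lemma conn_of_markov {B : Finset ((Fin r ↪ Fin n) → ℤ)}
    (hB : IsMarkovBasis n r B) {x y : (Fin r ↪ Fin n) → ℕ}
    (h : suffN n r x = suffN n r y) : Conn n r B x y := by
  obtain ⟨m, w, h0, hm, _, hstep⟩ := hB.2 x y h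
  have key : ∀ i ≤ m, Conn n r B x (w i) := by
    intro i hi
    induction i with
    | zero => rw [h0]; exact Relation.ReflTransGen.refl
    | succ j ih =>
        refine (ih (by omega)).tail ?_
        exact hstep j (by omega)
  exact hm ▸ key m le_rfl

/-- from `Conn` to the Markov-basis path format -/
lemma markov_of_conn {B : Finset ((Fin r ↪ Fin n) → ℤ)}
    (hker : ∀ z ∈ B, suffZ n r z = 0) {x y : (Fin r ↪ Fin n) → ℕ}
    (h : Conn n r B x y) :
    ∃ (m : ℕ) (w : ℕ → (Fin r ↪ Fin n) → ℕ),
      w 0 = x ∧ w m = y ∧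
      (∀ i ≤ m, suffN n r (w i) = suffN n r x) ∧
      (∀ i < m, (fun σ => (w (i+1) σ : ℤ) - (w i σ : ℤ)) ∈ B ∨
                (fun σ => (w i σ : ℤ) - (w (i+1) σ : ℤ)) ∈ B) := by
  have main : ∃ (m : ℕ) (w : ℕ → (Fin r ↪ Fin n) → ℕ),
      w 0 = x ∧ w m = y ∧ (∀ i < m, Bstep n r B (w i) (w (i+1))) := by
    induction h with
    | refl => exact ⟨0, fun _ => x, rfl, rfl, by omega⟩
    | @tail b c _ hstep ih =>
        obtain ⟨m, w, h0, hm, hstp⟩ := ih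
        refine ⟨m + 1, fun i => if i ≤ m then w i else c, by simpa using h0, by simp, ?_⟩
        intro i hi
        rcases Nat.lt_or_ge i m with hlt | hge
        · simpa [Nat.le_of_lt hlt, Nat.succ_le_of_lt hlt] using hstp i hlt
        · have : i = m := by omega
          subst this
          simpa [hm] using hstep
  obtain ⟨m, w, h0, hm, hstp⟩ := main
  refine ⟨m, w, h0, hm, ?_, fun i hi => hstp i hi⟩
  intro i hi
  induction i with
  | zero => rw [h0]
  | succ j ih =>
      rw [← ih (by omega)]
      exact (Bstep_suff hker (hstp j (by omega))).symm

end paths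


section parts
variable {n r : ℕ}

/-- positive part -/
def zp {n r : ℕ} (z : (Fin r ↪ Fin n) → ℤ) : (Fin r ↪ Fin n) → ℕ := fun σ => (z σ).toNat
/-- negative part -/
def zn {n r : ℕ} (z : (Fin r ↪ Fin n) → ℤ) : (Fin r ↪ Fin n) → ℕ := fun σ => (-(z σ)).toNat

lemma z_eq_parts (z : (Fin r ↪ Fin n) → ℤ) : z = fun σ => (zp z σ : ℤ) - zn z σ := by
  funext σ; unfold zp zn; omega

lemma sum_z_eq_zero (hr : 0 < r) {z : (Fin r ↪ Fin n) → ℤ} (h : suffZ n r z = 0) :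
    (∑ σ : Fin r ↪ Fin n, z σ) = 0 := by
  have : (∑ σ : Fin r ↪ Fin n, z σ) = ∑ k : Fin n, suffZ n r z (⟨0, hr⟩, k) := by
    unfold suffZ
    rw [Finset.sum_comm]
    exact Finset.sum_congr rfl fun σ _ => by simp
  rw [this, h]
  simp

lemma deg_parts {z : (Fin r ↪ Fin n) → ℤ} (hr : 0 < r) (h : suffZ n r z = 0) :
    (∑ σ : Fin r ↪ Fin n, zn z σ) = moveDeg n r z := by
  have h0 := sum_z_eq_zero hr h
  have : (∑ σ : Fin r ↪ Fin n, ((zp z σ : ℤ) - zn z σ)) = 0 := by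
    rw [← h0]
    exact Finset.sum_congr rfl fun σ _ => by unfold zp zn; omega
  rw [Finset.sum_sub_distrib] at this
  have : (∑ σ : Fin r ↪ Fin n, (zp z σ : ℤ)) = ∑ σ : Fin r ↪ Fin n, (zn z σ : ℤ) := by omega
  rw [← Nat.cast_sum, ← Nat.cast_sum] at this
  have h2 : (∑ x : Fin r ↪ Fin n, zp z x) = ∑ x : Fin r ↪ Fin n, zn z x := by exact_mod_cast this
  rw [← h2]; rfl

end parts

section connect
variable {n r : ℕ}

lemma moveDeg_diff_le (p q : (Fin r ↪ Fin n) → ℕ) :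
    moveDeg n r (fun σ => (q σ : ℤ) - p σ) ≤ ∑ σ : Fin r ↪ Fin n, q σ := by
  unfold moveDeg
  exact Finset.sum_le_sum fun σ _ => by show ((q σ : ℤ) - p σ).toNat ≤ q σ; omega

/-- connect two fiber points of size ≤ 3 sharing a common vote, avoiding any move of
degree ≥ 3 -/
lemma conn_erase_shared {B : Finset ((Fin 2 ↪ Fin n) → ℤ)}
    (hB : IsMarkovBasis n 2 B) (w : (Fin 2 ↪ Fin n) → ℤ) (hw : 3 ≤ moveDeg n 2 w)
    {p q : (Fin 2 ↪ Fin n) → ℕ} (v : Fin 2 ↪ Fin n)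
    (hsuff : suffN n 2 p = suffN n 2 q)
    (hp3 : (∑ σ : Fin 2 ↪ Fin n, p σ) ≤ 3)
    (hpv : 0 < p v) (hqv : 0 < q v) :
    Conn n 2 (B.erase w) p q := by
  classical
  set p' : (Fin 2 ↪ Fin n) → ℕ := fun τ => p τ - ind v τ with hp'
  set q' : (Fin 2 ↪ Fin n) → ℕ := fun τ => q τ - ind v τ with hq'
  have hpdec : p = ind v + p' := by
    funext τ; simp only [hp', Pi.add_apply, ind]
    split
    · next h => subst h; omega
    · omega
  have hqdec : q = ind v + q' := by
    funext τ; simp only [hq', Pi.add_apply, ind]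
    split
    · next h => subst h; omega
    · omega
  have hsuff' : suffN n 2 p' = suffN n 2 q' := by
    funext pr
    have h1 := congrFun hsuff pr
    rw [hpdec, hqdec, suffN_add, suffN_add] at h1
    simpa using h1
  obtain ⟨m, wseq, h0, hm, hfib, hstep⟩ := hB.2 p' q' hsuff'
  -- each intermediate point has total size ≤ 2
  have hsize : ∀ i ≤ m, (∑ σ : Fin 2 ↪ Fin n, wseq i σ) ≤ 2 := by
    intro i hi
    have h1 : suffN n 2 (wseq i) = suffN n 2 p' := hfib i hi
    have h2 : (∑ σ : Fin 2 ↪ Fin n, wseq i σ) = ∑ σ : Fin 2 ↪ Fin n, p' σ := by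
      rw [sum_eq_sum_suffN (by norm_num), sum_eq_sum_suffN (by norm_num), h1]
    have h3 : (∑ σ : Fin 2 ↪ Fin n, p σ) = (∑ σ : Fin 2 ↪ Fin n, p' σ) + 1 := by
      rw [hpdec]
      simp only [Pi.add_apply, Finset.sum_add_distrib, sum_ind]
      omega
    omega
  -- steps avoid w
  have hconn' : ∀ i ≤ m, Conn n 2 (B.erase w) p' (wseq i) := by
    intro i hi
    induction i with
    | zero => rw [h0]; exact Relation.ReflTransGen.refl
    | succ j ih =>
        refine (ih (by omega)).tail ?_
        rcases hstep j (by omega) with hd | hd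
        · left
          refine Finset.mem_erase.mpr ⟨?_, hd⟩
          intro hEq
          have : moveDeg n 2 (fun σ => (wseq (j+1) σ : ℤ) - wseq j σ) ≤ 2 :=
            le_trans (moveDeg_diff_le _ _) (hsize (j+1) (by omega))
          rw [hEq] at this; omega
        · right
          refine Finset.mem_erase.mpr ⟨?_, hd⟩
          intro hEq
          have : moveDeg n 2 (fun σ => (wseq j σ : ℤ) - wseq (j+1) σ) ≤ 2 :=
            le_trans (moveDeg_diff_le _ _) (hsize j (by omega))
          rw [hEq] at this; omega
  have := Conn_shift (B := B.erase w) (ind v) (hm ▸ hconn' m le_rfl)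
  rw [← hpdec, ← hqdec] at this
  exact this

end connect

section erase
variable {n r : ℕ}

lemma markov_of_erase_conn {B : Finset ((Fin r ↪ Fin n) → ℤ)}
    (hB : IsMarkovBasis n r B) {w : (Fin r ↪ Fin n) → ℤ}
    (hconn : Conn n r (B.erase w) (zp w) (zn w)) :
    IsMarkovBasis n r (B.erase w) := by
  classical
  have hker : ∀ z ∈ B.erase w, suffZ n r z = 0 := fun z hz => hB.1 z (Finset.mem_erase.mp hz).2
  refine ⟨hker, ?_⟩
  intro x y h
  refine markov_of_conn hker ?_
  have hrepl : ∀ p q : (Fin r ↪ Fin n) → ℕ, Bstep n r B p q → Conn n r (B.erase w) p q := by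
    intro p q hstep
    rcases hstep with hd | hd
    · by_cases hEq : (fun σ => (q σ : ℤ) - p σ) = w
      · -- the step is exactly w : replace it
        have hval : ∀ σ, (q σ : ℤ) - p σ = w σ := fun σ => congrFun hEq σ
        set s : (Fin r ↪ Fin n) → ℕ := fun σ => p σ - zn w σ with hs
        have hps : p = s + zn w := by
          funext σ; have := hval σ; simp only [hs, Pi.add_apply, zn, zp] at *; omega
        have hqs : q = s + zp w := by
          funext σ; have := hval σ; simp only [hs, Pi.add_apply, zn, zp] at *; omega
        rw [hps, hqs]
        exact Conn_shift s (Conn_symm hconn)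
      · exact Relation.ReflTransGen.single (Or.inl (Finset.mem_erase.mpr ⟨hEq, hd⟩))
    · by_cases hEq : (fun σ => (p σ : ℤ) - q σ) = w
      · have hval : ∀ σ, (p σ : ℤ) - q σ = w σ := fun σ => congrFun hEq σ
        set s : (Fin r ↪ Fin n) → ℕ := fun σ => q σ - zn w σ with hs
        have hps : p = s + zp w := by
          funext σ; have := hval σ; simp only [hs, Pi.add_apply, zn, zp] at *; omega
        have hqs : q = s + zn w := by
          funext σ; have := hval σ; simp only [hs, Pi.add_apply, zn, zp] at *; omega
        rw [hps, hqs]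
        exact Conn_shift s hconn
      · exact Relation.ReflTransGen.single (Or.inr (Finset.mem_erase.mpr ⟨hEq, hd⟩))
  have hxy : Conn n r B x y := conn_of_markov hB h
  clear h
  induction hxy with
  | refl => exact Relation.ReflTransGen.refl
  | tail _ hstep ih => exact Relation.ReflTransGen.trans ih (hrepl _ _ hstep)

/-- a minimal Markov basis never contains both `z` and `-z` (for `z ≠ -z`) -/
lemma not_both_in_minimal {B : Finset ((Fin r ↪ Fin n) → ℤ)}
    (hB : IsMarkovBasis n r B)
    (hmin : ∀ B' ⊂ B, ¬ IsMarkovBasis n r B')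
    {z : (Fin r ↪ Fin n) → ℤ} (hzz : z ≠ -z) (hz : z ∈ B) : ¬ (-z ∈ B) := by
  classical
  intro hnz
  apply hmin (B.erase (-z)) (Finset.erase_ssubset hnz)
  have hker : ∀ u ∈ B.erase (-z), suffZ n r u = 0 := fun u hu => hB.1 u (Finset.mem_erase.mp hu).2
  refine ⟨hker, ?_⟩
  intro x y h
  obtain ⟨m, wseq, h0, hm, hfib, hstep⟩ := hB.2 x y h
  refine ⟨m, wseq, h0, hm, hfib, ?_⟩
  intro i hi
  rcases hstep i hi with hd | hd
  · by_cases hEq : (fun σ => (wseq (i+1) σ : ℤ) - wseq i σ) = -z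
    · right
      refine Finset.mem_erase.mpr ⟨?_, ?_⟩
      · intro hc
        apply hzz
        have : (fun σ => (wseq i σ : ℤ) - wseq (i+1) σ) = z := by
          funext σ
          have := congrFun hEq σ
          have h2 := congrFun hc σ
          simp only [Pi.neg_apply] at *
          omega
        exact this ▸ hc
      · have : (fun σ => (wseq i σ : ℤ) - wseq (i+1) σ) = z := by
          funext σ
          have := congrFun hEq σ
          simp only [Pi.neg_apply] at *
          omega
        rw [this]; exact hz
    · exact Or.inl (Finset.mem_erase.mpr ⟨hEq, hd⟩)
  · by_cases hEq : (fun σ => (wseq i σ : ℤ) - wseq (i+1) σ) = -z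
    · left
      refine Finset.mem_erase.mpr ⟨?_, ?_⟩
      · intro hc
        apply hzz
        have : (fun σ => (wseq (i+1) σ : ℤ) - wseq i σ) = z := by
          funext σ
          have := congrFun hEq σ
          have h2 := congrFun hc σ
          simp only [Pi.neg_apply] at *
          omega
        exact this ▸ hc
      · have : (fun σ => (wseq (i+1) σ : ℤ) - wseq i σ) = z := by
          funext σ
          have := congrFun hEq σ
          simp only [Pi.neg_apply] at *
          omega
        rw [this]; exact hz
    · exact Or.inr (Finset.mem_erase.mpr ⟨hEq, hd⟩)

end erase

section comb
variable {n : ℕ}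

/-- count function for triples -/
def cnt {n : ℕ} (u v w k : Fin n) : ℕ :=
  (if u = k then 1 else 0) + (if v = k then 1 else 0) + (if w = k then 1 else 0)

lemma vne (v : Fin 2 ↪ Fin n) : v 0 ≠ v 1 := fun h => by
  have := v.injective h; simp at this

lemma Vt_of_emb (v : Fin 2 ↪ Fin n) : Vt (v 0) (v 1) (vne v) = v :=
  emb_ext rfl rfl

lemma ind_eq_E (v : Fin 2 ↪ Fin n) : ind v = E (v 0) (v 1) := by
  rw [E_eq_ind (vne v), Vt_of_emb]

lemma suffN_three_fst (a₁ a₂ a₃ b₁ b₂ b₃ : Fin n)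
    (h₁ : a₁ ≠ b₁) (h₂ : a₂ ≠ b₂) (h₃ : a₃ ≠ b₃) (k : Fin n) :
    suffN n 2 (E a₁ b₁ + E a₂ b₂ + E a₃ b₃) (0, k) = cnt a₁ a₂ a₃ k := by
  rw [suffN_add, suffN_add, suffN_E h₁, suffN_E h₂, suffN_E h₃]
  simp [cnt]
  congr

lemma suffN_three_snd (a₁ a₂ a₃ b₁ b₂ b₃ : Fin n)
    (h₁ : a₁ ≠ b₁) (h₂ : a₂ ≠ b₂) (h₃ : a₃ ≠ b₃) (k : Fin n) :
    suffN n 2 (E a₁ b₁ + E a₂ b₂ + E a₃ b₃) (1, k) = cnt b₁ b₂ b₃ k := by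
  rw [suffN_add, suffN_add, suffN_E h₁, suffN_E h₂, suffN_E h₃]
  simp [cnt]
  congr

lemma count_eq_cnt (u v w k : Fin n) :
    Multiset.count k ({u, v, w} : Multiset (Fin n)) = cnt u v w k := by
  simp only [cnt, Multiset.insert_eq_cons, Multiset.count_cons, Multiset.count_singleton]
  by_cases h1 : u = k <;> by_cases h2 : v = k <;> by_cases h3 : w = k <;>
    simp [h1, h2, h3, eq_comm] <;> omega

lemma multiset_of_cnt {u v w u' v' w' : Fin n}
    (h : ∀ k, cnt u v w k = cnt u' v' w' k) :
    ({u, v, w} : Multiset (Fin n)) = {u', v', w'} := by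
  ext k
  rw [count_eq_cnt, count_eq_cnt]
  exact h k

lemma cnt_of_multiset {u v w u' v' w' : Fin n}
    (h : ({u, v, w} : Multiset (Fin n)) = {u', v', w'}) (k : Fin n) :
    cnt u v w k = cnt u' v' w' k := by
  rw [← count_eq_cnt, ← count_eq_cnt, h]

/-- equal first- and second-coordinate multisets give equal sufficient statistics -/
lemma suffN_eq_of_ms {a₁ a₂ a₃ b₁ b₂ b₃ c₁ c₂ c₃ d₁ d₂ d₃ : Fin n}
    (h₁ : a₁ ≠ b₁) (h₂ : a₂ ≠ b₂) (h₃ : a₃ ≠ b₃)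
    (g₁ : c₁ ≠ d₁) (g₂ : c₂ ≠ d₂) (g₃ : c₃ ≠ d₃)
    (hf : ({a₁, a₂, a₃} : Multiset (Fin n)) = {c₁, c₂, c₃})
    (hs : ({b₁, b₂, b₃} : Multiset (Fin n)) = {d₁, d₂, d₃}) :
    suffN n 2 (E a₁ b₁ + E a₂ b₂ + E a₃ b₃) = suffN n 2 (E c₁ d₁ + E c₂ d₂ + E c₃ d₃) := by
  funext p
  obtain ⟨j, k⟩ := p
  match j with
  | 0 => rw [suffN_three_fst _ _ _ _ _ _ h₁ h₂ h₃, suffN_three_fst _ _ _ _ _ _ g₁ g₂ g₃]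
         exact cnt_of_multiset hf k
  | 1 => rw [suffN_three_snd _ _ _ _ _ _ h₁ h₂ h₃, suffN_three_snd _ _ _ _ _ _ g₁ g₂ g₃]
         exact cnt_of_multiset hs k

end comb

section core
variable {n : ℕ}

/-- the 3-cycle fiber element -/
def X {n : ℕ} (a b c : Fin n) : (Fin 2 ↪ Fin n) → ℕ := E a b + E b c + E c a

/-- the basic degree-3 move -/
def Z {n : ℕ} (a b c : Fin n) : (Fin 2 ↪ Fin n) → ℤ :=
  fun σ => (X a b c σ : ℤ) - X a c b σ

lemma pos_fst {a b c d e f : Fin n} (h : a ≠ b) : 0 < (E a b + E c d + E e f) (Vt a b h) := by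
  simp only [Pi.add_apply]
  have := E_apply_self h
  omega

lemma pos_snd {a b c d e f : Fin n} (h : c ≠ d) : 0 < (E a b + E c d + E e f) (Vt c d h) := by
  simp only [Pi.add_apply]
  have := E_apply_self h
  omega

lemma pos_trd {a b c d e f : Fin n} (h : e ≠ f) : 0 < (E a b + E c d + E e f) (Vt e f h) := by
  simp only [Pi.add_apply]
  have := E_apply_self h
  omega

lemma ms_of_cnt {u v w u' v' w' : Fin n}
    (h : ∀ k, cnt u v w k = cnt u' v' w' k) :
    ({u, v, w} : Multiset (Fin n)) = {u', v', w'} := multiset_of_cnt h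

lemma align (c₁ c₂ c₃ d₁ d₂ d₃ a₁ a₂ a₃ : Fin n)
    (g₁ : c₁ ≠ d₁) (g₂ : c₂ ≠ d₂) (g₃ : c₃ ≠ d₃)
    (hf : ({a₁, a₂, a₃} : Multiset (Fin n)) = {c₁, c₂, c₃}) :
    ∃ e₁ e₂ e₃, a₁ ≠ e₁ ∧ a₂ ≠ e₂ ∧ a₃ ≠ e₃ ∧
      ({e₁, e₂, e₃} : Multiset (Fin n)) = {d₁, d₂, d₃} ∧
      E c₁ d₁ + E c₂ d₂ + E c₃ d₃ = E a₁ e₁ + E a₂ e₂ + E a₃ e₃ := by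
  rcases ms3 _ _ _ _ _ _ hf with ⟨q1, ⟨q2, q3⟩ | ⟨q2, q3⟩⟩ |
    ⟨q1, ⟨q2, q3⟩ | ⟨q2, q3⟩⟩ | ⟨q1, ⟨q2, q3⟩ | ⟨q2, q3⟩⟩ <;> subst q1 <;> subst q2 <;> subst q3
  · exact ⟨d₁, d₂, d₃, g₁, g₂, g₃, rfl, by ring⟩
  · exact ⟨d₁, d₃, d₂, g₁, g₃, g₂,
      ms_of_cnt (fun k => by unfold cnt; split_ifs <;> omega), by ring⟩
  · exact ⟨d₂, d₁, d₃, g₂, g₁, g₃,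
      ms_of_cnt (fun k => by unfold cnt; split_ifs <;> omega), by ring⟩
  · exact ⟨d₂, d₃, d₁, g₂, g₃, g₁,
      ms_of_cnt (fun k => by unfold cnt; split_ifs <;> omega), by ring⟩
  · exact ⟨d₃, d₁, d₂, g₃, g₁, g₂,
      ms_of_cnt (fun k => by unfold cnt; split_ifs <;> omega), by ring⟩
  · exact ⟨d₃, d₂, d₁, g₃, g₂, g₁,
      ms_of_cnt (fun k => by unfold cnt; split_ifs <;> omega), by ring⟩

end core

section core2
variable {n : ℕ}

lemma core {a₁ a₂ a₃ b₁ b₂ b₃ c₁ c₂ c₃ d₁ d₂ d₃ : Fin n}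
    (h₁ : a₁ ≠ b₁) (h₂ : a₂ ≠ b₂) (h₃ : a₃ ≠ b₃)
    (g₁ : c₁ ≠ d₁) (g₂ : c₂ ≠ d₂) (g₃ : c₃ ≠ d₃)
    (x y : (Fin 2 ↪ Fin n) → ℕ)
    (hx : x = E a₁ b₁ + E a₂ b₂ + E a₃ b₃)
    (hy : y = E c₁ d₁ + E c₂ d₂ + E c₃ d₃)
    (hsuff : suffN n 2 x = suffN n 2 y)
    (hdisj : ∀ σ, x σ = 0 ∨ y σ = 0) :
    (∃ u, suffN n 2 u = suffN n 2 x ∧ (∃ σ, 0 < u σ ∧ 0 < x σ) ∧ (∃ σ, 0 < u σ ∧ 0 < y σ)) ∨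
    (∃ a b c, a ≠ b ∧ b ≠ c ∧ a ≠ c ∧ x = X a b c ∧ y = X a c b) := by
  have hf : ({a₁, a₂, a₃} : Multiset (Fin n)) = {c₁, c₂, c₃} := by
    apply multiset_of_cnt
    intro k
    have := congrFun hsuff (0, k)
    rw [hx, hy, suffN_three_fst _ _ _ _ _ _ h₁ h₂ h₃,
      suffN_three_fst _ _ _ _ _ _ g₁ g₂ g₃] at this
    exact this
  have hs : ({b₁, b₂, b₃} : Multiset (Fin n)) = {d₁, d₂, d₃} := by
    apply multiset_of_cnt
    intro k
    have := congrFun hsuff (1, k)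
    rw [hx, hy, suffN_three_snd _ _ _ _ _ _ h₁ h₂ h₃,
      suffN_three_snd _ _ _ _ _ _ g₁ g₂ g₃] at this
    exact this
  obtain ⟨e₁, e₂, e₃, k₁, k₂, k₃, hed, hyal⟩ := align c₁ c₂ c₃ d₁ d₂ d₃ a₁ a₂ a₃ g₁ g₂ g₃ hf
  rw [hyal] at hy
  clear hyal hf
  have hms : ({e₁, e₂, e₃} : Multiset (Fin n)) = {b₁, b₂, b₃} := hed.trans hs.symm
  -- e_i ≠ b_i from disjointness
  have hne₁ : e₁ ≠ b₁ := by
    intro hEq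
    subst hEq
    rcases hdisj (Vt a₁ e₁ h₁) with hc | hc
    · rw [hx] at hc; have := pos_fst (c := a₂) (d := b₂) (e := a₃) (f := b₃) h₁; omega
    · rw [hy] at hc; have := pos_fst (c := a₂) (d := e₂) (e := a₃) (f := e₃) h₁; omega
  have hne₂ : e₂ ≠ b₂ := by
    intro hEq
    subst hEq
    rcases hdisj (Vt a₂ e₂ h₂) with hc | hc
    · rw [hx] at hc; have := pos_snd (a := a₁) (b := b₁) (e := a₃) (f := b₃) h₂; omega
    · rw [hy] at hc; have := pos_snd (a := a₁) (b := e₁) (e := a₃) (f := e₃) h₂; omega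
  have hne₃ : e₃ ≠ b₃ := by
    intro hEq
    subst hEq
    rcases hdisj (Vt a₃ e₃ h₃) with hc | hc
    · rw [hx] at hc; have := pos_trd (a := a₁) (b := b₁) (c := a₂) (d := b₂) h₃; omega
    · rw [hy] at hc; have := pos_trd (a := a₁) (b := e₁) (c := a₂) (d := e₂) h₃; omega
  rcases ms3 _ _ _ _ _ _ hms with ⟨q1, _⟩ |
    ⟨q1, ⟨q2, q3⟩ | ⟨q2, q3⟩⟩ | ⟨q1, ⟨q2, q3⟩ | ⟨q2, q3⟩⟩
  · exact absurd q1 hne₁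
  · exact absurd q3 hne₃
  · -- Case I : e = (b₂, b₃, b₁)
    rw [q1, q2, q3] at hy
    rw [q1] at k₁; rw [q2] at k₂; rw [q3] at k₃
    by_cases hA : a₂ = b₁
    · by_cases hB : a₃ = b₂
      · by_cases hC : a₁ = b₃
        · right
          refine ⟨a₁, a₂, a₃, ?_, ?_, ?_, ?_, ?_⟩
          · rw [hA]; exact h₁
          · rw [hB]; exact h₂
          · intro h; exact h₃ (h.symm.trans hC)
          · rw [hx, ← hA, ← hB, ← hC]; unfold X; ring
          · rw [hy, ← hA, ← hB, ← hC]; unfold X; ring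
        · left
          refine ⟨E a₁ b₃ + E a₂ b₂ + E a₃ b₁, ?_, ⟨Vt a₂ b₂ h₂, pos_snd h₂, ?_⟩,
            ⟨Vt a₃ b₁ k₃, pos_trd k₃, ?_⟩⟩
          · rw [hx]
            exact suffN_eq_of_ms hC h₂ k₃ h₁ h₂ h₃ rfl
              (ms_of_cnt (fun k => by unfold cnt; split_ifs <;> omega))
          · rw [hx]; exact pos_snd h₂
          · rw [hy]; exact pos_trd k₃
      · left
        refine ⟨E a₁ b₁ + E a₂ b₃ + E a₃ b₂, ?_, ⟨Vt a₁ b₁ h₁, pos_fst h₁, ?_⟩,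
          ⟨Vt a₂ b₃ k₂, pos_snd k₂, ?_⟩⟩
        · rw [hx]
          exact suffN_eq_of_ms h₁ k₂ hB h₁ h₂ h₃ rfl
            (ms_of_cnt (fun k => by unfold cnt; split_ifs <;> omega))
        · rw [hx]; exact pos_fst h₁
        · rw [hy]; exact pos_snd k₂
    · left
      refine ⟨E a₁ b₂ + E a₂ b₁ + E a₃ b₃, ?_, ⟨Vt a₃ b₃ h₃, pos_trd h₃, ?_⟩,
        ⟨Vt a₁ b₂ k₁, pos_fst k₁, ?_⟩⟩
      · rw [hx]
        exact suffN_eq_of_ms k₁ hA h₃ h₁ h₂ h₃ rfl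
          (ms_of_cnt (fun k => by unfold cnt; split_ifs <;> omega))
      · rw [hx]; exact pos_trd h₃
      · rw [hy]; exact pos_fst k₁
  · -- Case II : e = (b₃, b₁, b₂)
    rw [q1, q2, q3] at hy
    rw [q1] at k₁; rw [q2] at k₂; rw [q3] at k₃
    by_cases hA : a₃ = b₁
    · by_cases hB : a₁ = b₂
      · by_cases hC : a₂ = b₃
        · right
          refine ⟨a₁, a₃, a₂, ?_, ?_, ?_, ?_, ?_⟩
          · rw [hA]; exact h₁
          · rw [hC]; exact h₃
          · intro h; exact h₂ (h.symm.trans hB)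
          · rw [hx, ← hA, ← hB, ← hC]; unfold X; ring
          · rw [hy, ← hA, ← hB, ← hC]; unfold X; ring
        · left
          refine ⟨E a₁ b₁ + E a₂ b₃ + E a₃ b₂, ?_, ⟨Vt a₁ b₁ h₁, pos_fst h₁, ?_⟩,
            ⟨Vt a₃ b₂ k₃, pos_trd k₃, ?_⟩⟩
          · rw [hx]
            exact suffN_eq_of_ms h₁ hC k₃ h₁ h₂ h₃ rfl
              (ms_of_cnt (fun k => by unfold cnt; split_ifs <;> omega))
          · rw [hx]; exact pos_fst h₁
          · rw [hy]; exact pos_trd k₃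
      · left
        refine ⟨E a₁ b₂ + E a₂ b₁ + E a₃ b₃, ?_, ⟨Vt a₃ b₃ h₃, pos_trd h₃, ?_⟩,
          ⟨Vt a₂ b₁ k₂, pos_snd k₂, ?_⟩⟩
        · rw [hx]
          exact suffN_eq_of_ms hB k₂ h₃ h₁ h₂ h₃ rfl
            (ms_of_cnt (fun k => by unfold cnt; split_ifs <;> omega))
        · rw [hx]; exact pos_trd h₃
        · rw [hy]; exact pos_snd k₂
    · left
      refine ⟨E a₁ b₃ + E a₂ b₂ + E a₃ b₁, ?_, ⟨Vt a₂ b₂ h₂, pos_snd h₂, ?_⟩,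
        ⟨Vt a₁ b₃ k₁, pos_fst k₁, ?_⟩⟩
      · rw [hx]
        exact suffN_eq_of_ms k₁ h₂ hA h₁ h₂ h₃ rfl
          (ms_of_cnt (fun k => by unfold cnt; split_ifs <;> omega))
      · rw [hx]; exact pos_snd h₂
      · rw [hy]; exact pos_fst k₁
  · exact absurd q2 hne₂

end core2

section fiber
variable {n : ℕ}

lemma exists_pos {x : (Fin 2 ↪ Fin n) → ℕ} (h : 0 < ∑ σ : Fin 2 ↪ Fin n, x σ) :
    ∃ v, 0 < x v := by
  by_contra hc
  push_neg at hc
  simp only [Nat.le_zero] at hc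
  rw [Finset.sum_congr rfl (fun σ _ => hc σ)] at h
  simp at h

lemma split_ind {x : (Fin 2 ↪ Fin n) → ℕ} {v} (hv : 0 < x v) :
    ∃ x' : (Fin 2 ↪ Fin n) → ℕ,
      x = ind v + x' ∧ (∑ σ : Fin 2 ↪ Fin n, x' σ) + 1 = ∑ σ : Fin 2 ↪ Fin n, x σ := by
  refine ⟨fun τ => x τ - ind v τ, ?_, ?_⟩
  · funext τ; simp only [Pi.add_apply, ind]
    split
    · next h => subst h; omega
    · omega
  · have hdec : x = ind v + (fun τ => x τ - ind v τ) := by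
      funext τ; simp only [Pi.add_apply, ind]
      split
      · next h => subst h; omega
      · omega
    conv_rhs => rw [hdec]
    simp only [Pi.add_apply, Finset.sum_add_distrib, sum_ind]
    omega

lemma decomp3 {x : (Fin 2 ↪ Fin n) → ℕ} (h : (∑ σ : Fin 2 ↪ Fin n, x σ) = 3) :
    ∃ v₁ v₂ v₃, x = ind v₁ + ind v₂ + ind v₃ := by
  obtain ⟨v₁, hv₁⟩ := exists_pos (x := x) (by omega)
  obtain ⟨x₁, hd₁, hs₁⟩ := split_ind hv₁
  obtain ⟨v₂, hv₂⟩ := exists_pos (x := x₁) (by omega)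
  obtain ⟨x₂, hd₂, hs₂⟩ := split_ind hv₂
  obtain ⟨v₃, hv₃⟩ := exists_pos (x := x₂) (by omega)
  obtain ⟨x₃, hd₃, hs₃⟩ := split_ind hv₃
  have hz : x₃ = 0 := by
    funext τ
    have hle : x₃ τ ≤ ∑ σ : Fin 2 ↪ Fin n, x₃ σ :=
      Finset.single_le_sum (fun σ _ => Nat.zero_le _) (Finset.mem_univ τ)
    have : (∑ σ : Fin 2 ↪ Fin n, x₃ σ) = 0 := by omega
    simp only [Pi.zero_apply]
    omega
  refine ⟨v₁, v₂, v₃, ?_⟩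
  rw [hd₁, hd₂, hd₃, hz]
  funext τ; simp [add_assoc]

lemma X_apply (a b c : Fin n) (σ : Fin 2 ↪ Fin n) :
    X a b c σ = (if σ 0 = a ∧ σ 1 = b then 1 else 0) + (if σ 0 = b ∧ σ 1 = c then 1 else 0) +
      (if σ 0 = c ∧ σ 1 = a then 1 else 0) := rfl

lemma X_ne_zero_iff {a b c : Fin n} (σ : Fin 2 ↪ Fin n) :
    X a b c σ ≠ 0 ↔ (σ 0 = a ∧ σ 1 = b) ∨ (σ 0 = b ∧ σ 1 = c) ∨ (σ 0 = c ∧ σ 1 = a) := by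
  rw [X_apply]
  split_ifs <;> simp_all

lemma X_disj {a b c : Fin n} (hab : a ≠ b) (hbc : b ≠ c) (hac : a ≠ c) (σ : Fin 2 ↪ Fin n) :
    X a b c σ = 0 ∨ X a c b σ = 0 := by
  by_contra hcon
  push_neg at hcon
  obtain ⟨hc1, hc2⟩ := hcon
  rw [X_ne_zero_iff] at hc1 hc2
  rcases hc1 with ⟨p1, p2⟩ | ⟨p1, p2⟩ | ⟨p1, p2⟩ <;>
    rcases hc2 with ⟨q1, q2⟩ | ⟨q1, q2⟩ | ⟨q1, q2⟩ <;> simp_all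

lemma sum_X {a b c : Fin n} (hab : a ≠ b) (hbc : b ≠ c) (hac : a ≠ c) :
    (∑ σ : Fin 2 ↪ Fin n, X a b c σ) = 3 := by
  unfold X
  simp only [Pi.add_apply, Finset.sum_add_distrib,
    E_eq_ind hab, E_eq_ind hbc, E_eq_ind (fun h => hac h.symm), sum_ind]

lemma suffN_X_eq {a b c : Fin n} (hab : a ≠ b) (hbc : b ≠ c) (hac : a ≠ c) :
    suffN n 2 (X a b c) = suffN n 2 (X a c b) := by
  unfold X
  exact suffN_eq_of_ms hab hbc (fun h => hac h.symm) hac (fun h => hbc h.symm)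
    (fun h => hab h.symm)
    (ms_of_cnt (fun k => by unfold cnt; split_ifs <;> omega))
    (ms_of_cnt (fun k => by unfold cnt; split_ifs <;> omega))

/-- the 3-cycle fiber contains exactly the two cyclic orientations -/
lemma fiber3 {a b c : Fin n} (hab : a ≠ b) (hbc : b ≠ c) (hac : a ≠ c)
    {x : (Fin 2 ↪ Fin n) → ℕ} (hsuff : suffN n 2 x = suffN n 2 (X a b c)) :
    x = X a b c ∨ x = X a c b := by
  have hsum : (∑ σ : Fin 2 ↪ Fin n, x σ) = 3 := by
    rw [sum_eq_sum_suffN (by norm_num), ← sum_X hab hbc hac,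
      sum_eq_sum_suffN (r := 2) (by norm_num)]
    exact Finset.sum_congr rfl (fun k _ => by rw [hsuff])
  obtain ⟨v₁, v₂, v₃, hdec⟩ := decomp3 hsum
  rw [ind_eq_E v₁, ind_eq_E v₂, ind_eq_E v₃] at hdec
  have hca : c ≠ a := fun h => hac h.symm
  -- first coordinates of x form the multiset {a, b, c}
  have hf : ({a, b, c} : Multiset (Fin n)) = {v₁ 0, v₂ 0, v₃ 0} := by
    apply multiset_of_cnt
    intro k
    have h1 := congrFun hsuff (0, k)
    rw [hdec, suffN_three_fst _ _ _ _ _ _ (vne v₁) (vne v₂) (vne v₃)] at h1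
    rw [show X a b c = E a b + E b c + E c a from rfl,
      suffN_three_fst _ _ _ _ _ _ hab hbc hca] at h1
    exact h1.symm
  obtain ⟨e₁, e₂, e₃, k₁, k₂, k₃, hed, hxal⟩ :=
    align (v₁ 0) (v₂ 0) (v₃ 0) (v₁ 1) (v₂ 1) (v₃ 1) a b c (vne v₁) (vne v₂) (vne v₃) hf
  rw [hxal] at hdec
  -- second coordinates form the multiset {b, c, a} = {a, b, c}
  have hsnd : ({e₁, e₂, e₃} : Multiset (Fin n)) = {a, b, c} := by
    have h0 : ({e₁, e₂, e₃} : Multiset (Fin n)) = {b, c, a} := by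
      apply multiset_of_cnt
      intro k
      have h1 := congrFun hsuff (1, k)
      rw [hdec, suffN_three_snd _ _ _ _ _ _ k₁ k₂ k₃] at h1
      rw [show X a b c = E a b + E b c + E c a from rfl,
        suffN_three_snd _ _ _ _ _ _ hab hbc hca] at h1
      exact h1
    rw [h0]
    exact ms_of_cnt (fun k => by unfold cnt; split_ifs <;> omega)
  rcases ms3 _ _ _ _ _ _ hsnd with ⟨q1, _⟩ |
    ⟨q1, ⟨q2, q3⟩ | ⟨q2, q3⟩⟩ | ⟨q1, ⟨q2, q3⟩ | ⟨q2, q3⟩⟩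
  · exact absurd q1.symm k₁
  · -- e = (b, a, c) : e₃ = c impossible
    exact absurd q3.symm k₃
  · -- e = (b, c, a) : x = X a b c
    left
    rw [hdec, q1, q2, q3]
    rfl
  · -- e = (c, a, b) : x = X a c b
    right
    rw [hdec, q1, q2, q3]
    unfold X
    ring
  · -- e = (c, b, a) : e₂ = b impossible
    exact absurd q2.symm k₂

end fiber

section zmove
variable {n : ℕ}

lemma Z_neg (a b c : Fin n) : Z a c b = -Z a b c := by
  funext σ
  simp only [Z, Pi.neg_apply]
  ring

lemma X_vt_one {a b c : Fin n} (hab : a ≠ b) (hbc : b ≠ c) (hac : a ≠ c) :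
    X a b c (Vt a b hab) = 1 := by
  rw [X_apply]
  simp [hab, hbc, hac, Ne.symm hab, Ne.symm hbc, Ne.symm hac]

lemma X_vt_zero {a b c : Fin n} (hab : a ≠ b) (hbc : b ≠ c) (hac : a ≠ c) :
    X a c b (Vt a b hab) = 0 := by
  rw [X_apply]
  simp [hab, hbc, hac, Ne.symm hab, Ne.symm hbc, Ne.symm hac]

lemma Z_vt {a b c : Fin n} (hab : a ≠ b) (hbc : b ≠ c) (hac : a ≠ c) :
    Z a b c (Vt a b hab) = 1 := by
  simp only [Z, X_vt_one hab hbc hac, X_vt_zero hab hbc hac]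
  norm_num

lemma Z_ne_neg_self {a b c : Fin n} (hab : a ≠ b) (hbc : b ≠ c) (hac : a ≠ c) :
    Z a b c ≠ -Z a b c := by
  intro h
  have h1 := congrFun h (Vt a b hab)
  rw [Pi.neg_apply, Z_vt hab hbc hac] at h1
  omega

lemma moveDeg_Z {a b c : Fin n} (hab : a ≠ b) (hbc : b ≠ c) (hac : a ≠ c) :
    moveDeg n 2 (Z a b c) = 3 := by
  unfold moveDeg
  rw [← sum_X hab hbc hac]
  refine Finset.sum_congr rfl fun σ _ => ?_
  have hd := X_disj hab hbc hac σ
  show ((X a b c σ : ℤ) - X a c b σ).toNat = X a b c σ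
  omega

lemma Z_ne_zero_iff {a b c : Fin n} (hab : a ≠ b) (hbc : b ≠ c) (hac : a ≠ c)
    (σ : Fin 2 ↪ Fin n) :
    Z a b c σ ≠ 0 ↔ (X a b c σ ≠ 0 ∨ X a c b σ ≠ 0) := by
  have hd := X_disj hab hbc hac σ
  show (X a b c σ : ℤ) - X a c b σ ≠ 0 ↔ _
  omega

lemma exists_change {α : Type*} {A C : α} {m : ℕ} {w : ℕ → α}
    (h0 : w 0 = A) (hm : w m = C) (hne : A ≠ C) : ∃ i < m, w i ≠ w (i + 1) := by
  by_contra hc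
  push_neg at hc
  have : ∀ i ≤ m, w i = A := by
    intro i hi
    induction i with
    | zero => exact h0
    | succ j ih => rw [← hc j (by omega)]; exact ih (by omega)
  exact hne ((this m le_rfl).symm.trans hm)

/-- lower bound : any Markov basis contains one of the two degree-3 moves on {a,b,c} -/
lemma zin {B : Finset ((Fin 2 ↪ Fin n) → ℤ)} (hB : IsMarkovBasis n 2 B)
    {a b c : Fin n} (hab : a ≠ b) (hbc : b ≠ c) (hac : a ≠ c) :
    Z a b c ∈ B ∨ Z a c b ∈ B := by
  have hca : c ≠ a := fun h => hac h.symm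
  have hcb : c ≠ b := fun h => hbc h.symm
  obtain ⟨m, w, h0, hm, hfib, hstep⟩ := hB.2 (X a b c) (X a c b) (suffN_X_eq hab hbc hac)
  have hXne : X a b c ≠ X a c b := by
    intro h
    have h1 := congrFun h (Vt a b hab)
    rw [X_vt_one hab hbc hac, X_vt_zero hab hbc hac] at h1
    omega
  obtain ⟨i, hi, hchg⟩ := exists_change h0 hm hXne
  have hv1 : w i = X a b c ∨ w i = X a c b :=
    fiber3 hab hbc hac ((hfib i (by omega)).trans (h0 ▸ rfl))
  have hv2 : w (i+1) = X a b c ∨ w (i+1) = X a c b :=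
    fiber3 hab hbc hac ((hfib (i+1) (by omega)).trans (h0 ▸ rfl))
  rcases hv1 with e1 | e1 <;> rcases hv2 with e2 | e2
  · exact absurd (e1.trans e2.symm) hchg
  · -- step from X a b c to X a c b
    rcases hstep i hi with hd | hd
    · right
      have : (fun σ => ((w (i+1)) σ : ℤ) - (w i) σ) = Z a c b := by
        rw [e1, e2]; rfl
      rwa [this] at hd
    · left
      have : (fun σ => ((w i) σ : ℤ) - (w (i+1)) σ) = Z a b c := by
        rw [e1, e2]; rfl
      rwa [this] at hd
  · rcases hstep i hi with hd | hd
    · left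
      have : (fun σ => ((w (i+1)) σ : ℤ) - (w i) σ) = Z a b c := by
        rw [e1, e2]; rfl
      rwa [this] at hd
    · right
      have : (fun σ => ((w i) σ : ℤ) - (w (i+1)) σ) = Z a c b := by
        rw [e1, e2]; rfl
      rwa [this] at hd
  · exact absurd (e1.trans e2.symm) hchg

/-- upper bound : in a minimal Markov basis, every degree-3 move is one of the `Z a b c` -/
lemma up3 {B : Finset ((Fin 2 ↪ Fin n) → ℤ)} (hB : IsMarkovBasis n 2 B)
    (hmin : ∀ B' ⊂ B, ¬ IsMarkovBasis n 2 B')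
    {w : (Fin 2 ↪ Fin n) → ℤ} (hw : w ∈ B) (hdeg : moveDeg n 2 w = 3) :
    ∃ a b c : Fin n, a ≠ b ∧ b ≠ c ∧ a ≠ c ∧ w = Z a b c := by
  classical
  have hker : suffZ n 2 w = 0 := hB.1 w hw
  have hwparts : w = fun σ => (zp w σ : ℤ) - zn w σ := z_eq_parts w
  have hsuffpn : suffN n 2 (zn w) = suffN n 2 (zp w) :=
    suffN_eq_of_diff (by rw [← hwparts]; exact hker)
  have hsump : (∑ σ : Fin 2 ↪ Fin n, zp w σ) = 3 := hdeg
  have hsumn : (∑ σ : Fin 2 ↪ Fin n, zn w σ) = 3 := by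
    rw [deg_parts (by norm_num) hker]; exact hdeg
  obtain ⟨v₁, v₂, v₃, hdx⟩ := decomp3 hsump
  obtain ⟨u₁, u₂, u₃, hdy⟩ := decomp3 hsumn
  rw [ind_eq_E v₁, ind_eq_E v₂, ind_eq_E v₃] at hdx
  rw [ind_eq_E u₁, ind_eq_E u₂, ind_eq_E u₃] at hdy
  have hdisj : ∀ σ, zp w σ = 0 ∨ zn w σ = 0 := by
    intro σ; unfold zp zn; omega
  rcases core (vne v₁) (vne v₂) (vne v₃) (vne u₁) (vne u₂) (vne u₃)
      (zp w) (zn w) hdx hdy hsuffpn.symm hdisj with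
    ⟨u, hu, ⟨σ₁, hσ₁u, hσ₁x⟩, ⟨σ₂, hσ₂u, hσ₂y⟩⟩ | ⟨a, b, c, hab, hbc, hac, hxX, hyX⟩
  · -- w is redundant : contradiction with minimality
    exfalso
    apply hmin (B.erase w) (Finset.erase_ssubset hw)
    apply markov_of_erase_conn hB
    have hsumu : (∑ σ : Fin 2 ↪ Fin n, u σ) = 3 := by
      rw [sum_eq_sum_suffN (by norm_num), ← hsump,
        sum_eq_sum_suffN (r := 2) (by norm_num)]
      exact Finset.sum_congr rfl (fun k _ => by rw [hu])
    have hc1 : Conn n 2 (B.erase w) (zp w) u :=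
      conn_erase_shared hB w (by omega) σ₁ hu.symm (by omega) hσ₁x hσ₁u
    have hc2 : Conn n 2 (B.erase w) u (zn w) :=
      conn_erase_shared hB w (by omega) σ₂ (hu.trans hsuffpn.symm) (by omega) hσ₂u hσ₂y
    exact hc1.trans hc2
  · refine ⟨a, b, c, hab, hbc, hac, ?_⟩
    rw [hwparts, hxX, hyX]
    rfl

lemma X_rot (a b c : Fin n) : X a b c = X b c a := by
  unfold X; ring

lemma Z_rot (a b c : Fin n) : Z b c a = Z a b c := by
  funext σ
  simp only [Z]
  rw [← X_rot, show X b a c = X a c b from ((X_rot a c b).trans (X_rot c b a)).symm]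

lemma cnt_mem {a b c k : Fin n} (hab : a ≠ b) (hbc : b ≠ c) (hac : a ≠ c) :
    cnt a b c k = if k = a ∨ k = b ∨ k = c then 1 else 0 := by
  unfold cnt
  by_cases h1 : a = k <;> by_cases h2 : b = k <;> by_cases h3 : c = k <;>
    simp_all [eq_comm]

/-- the support-firsts of a degree-3 move -/
noncomputable def Gmap {n : ℕ} (w : (Fin 2 ↪ Fin n) → ℤ) : Finset (Fin n) :=
  Finset.image (fun σ : Fin 2 ↪ Fin n => σ 0) (Finset.univ.filter fun σ => w σ ≠ 0)

lemma Gmap_Z {a b c : Fin n} (hab : a ≠ b) (hbc : b ≠ c) (hac : a ≠ c) :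
    Gmap (Z a b c) = {a, b, c} := by
  have hca : c ≠ a := fun h => hac h.symm
  have hcb : c ≠ b := fun h => hbc h.symm
  ext k
  simp only [Gmap, Finset.mem_image, Finset.mem_filter, Finset.mem_univ, true_and,
    Finset.mem_insert, Finset.mem_singleton]
  constructor
  · rintro ⟨σ, hσ, rfl⟩
    rw [Z_ne_zero_iff hab hbc hac] at hσ
    rcases hσ with h | h
    · rw [X_ne_zero_iff] at h
      rcases h with ⟨h, _⟩ | ⟨h, _⟩ | ⟨h, _⟩
      · exact Or.inl h
      · exact Or.inr (Or.inl h)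
      · exact Or.inr (Or.inr h)
    · rw [X_ne_zero_iff] at h
      rcases h with ⟨h, _⟩ | ⟨h, _⟩ | ⟨h, _⟩
      · exact Or.inl h
      · exact Or.inr (Or.inr h)
      · exact Or.inr (Or.inl h)
  · intro hk
    rcases hk with rfl | rfl | rfl
    · refine ⟨Vt k b hab, ?_, rfl⟩
      rw [Z_ne_zero_iff hab hbc hac]
      left
      rw [X_ne_zero_iff]
      exact Or.inl ⟨rfl, rfl⟩
    · refine ⟨Vt k c hbc, ?_, rfl⟩
      rw [Z_ne_zero_iff hab hbc hac]
      left
      rw [X_ne_zero_iff]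
      exact Or.inr (Or.inl ⟨rfl, rfl⟩)
    · refine ⟨Vt k a hca, ?_, rfl⟩
      rw [Z_ne_zero_iff hab hbc hac]
      left
      rw [X_ne_zero_iff]
      exact Or.inr (Or.inr ⟨rfl, rfl⟩)

/-- a degree-3 move of a minimal Markov basis is determined by its support triple -/
lemma inj_Z {B : Finset ((Fin 2 ↪ Fin n) → ℤ)} (hB : IsMarkovBasis n 2 B)
    (hmin : ∀ B' ⊂ B, ¬ IsMarkovBasis n 2 B')
    {a b c a' b' c' : Fin n} (hab : a ≠ b) (hbc : b ≠ c) (hac : a ≠ c)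
    (hab' : a' ≠ b') (hbc' : b' ≠ c') (hac' : a' ≠ c')
    (hw : Z a b c ∈ B) (hw' : Z a' b' c' ∈ B)
    (hG : ({a', b', c'} : Finset (Fin n)) = {a, b, c}) : Z a' b' c' = Z a b c := by
  have hms : ({a', b', c'} : Multiset (Fin n)) = {a, b, c} := by
    apply multiset_of_cnt
    intro k
    rw [cnt_mem hab' hbc' hac', cnt_mem hab hbc hac]
    have := Finset.ext_iff.mp hG k
    simp only [Finset.mem_insert, Finset.mem_singleton] at this
    exact if_congr this rfl rfl
  have key : Z a' b' c' = Z a b c ∨ Z a' b' c' = Z a c b := by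
    rcases ms3 _ _ _ _ _ _ hms with ⟨q1, ⟨q2, q3⟩ | ⟨q2, q3⟩⟩ |
      ⟨q1, ⟨q2, q3⟩ | ⟨q2, q3⟩⟩ | ⟨q1, ⟨q2, q3⟩ | ⟨q2, q3⟩⟩ <;> rw [q1, q2, q3]
    · exact Or.inl rfl
    · exact Or.inr rfl
    · exact Or.inr ((Z_rot c b a).trans (Z_rot a c b))
    · exact Or.inl (Z_rot a b c)
    · exact Or.inl ((Z_rot b c a).trans (Z_rot a b c))
    · exact Or.inr (Z_rot a c b)
  rcases key with h | h
  · exact h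
  · exfalso
    rw [h, Z_neg] at hw'
    exact not_both_in_minimal hB hmin (Z_ne_neg_self hab hbc hac) hw hw'

end zmove


/-- **Every minimal Markov basis for A_{n,2} contains exactly C(n,3) moves of degree three.** -/
theorem count_deg_three_moves_r2
    (n : ℕ) (hn : 2 ≤ n)
    (B : Finset ((Fin 2 ↪ Fin n) → ℤ))
    (hB : IsMarkovBasis n 2 B)
    (hmin : ∀ B' ⊂ B, ¬ IsMarkovBasis n 2 B') :
    (B.filter fun z => moveDeg n 2 z = 3).card = n.choose 3 := by
  classical
  have hcard : ((Finset.univ : Finset (Fin n)).powersetCard 3).card = n.choose 3 := by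
    rw [Finset.card_powersetCard, Finset.card_univ, Fintype.card_fin]
  rw [← hcard]
  apply Finset.card_bij (i := fun w _ => Gmap w)
  · -- maps into powersetCard 3
    intro w hw
    obtain ⟨hwB, hdeg⟩ := Finset.mem_filter.mp hw
    obtain ⟨a, b, c, hab, hbc, hac, rfl⟩ := up3 hB hmin hwB hdeg
    rw [Gmap_Z hab hbc hac]
    rw [Finset.mem_powersetCard]
    refine ⟨Finset.subset_univ _, ?_⟩
    exact Finset.card_eq_three.mpr ⟨a, b, c, hab, hac, hbc, rfl⟩
  · -- injective
    intro w hw w' hw' hG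
    obtain ⟨hwB, hdeg⟩ := Finset.mem_filter.mp hw
    obtain ⟨hwB', hdeg'⟩ := Finset.mem_filter.mp hw'
    obtain ⟨a, b, c, hab, hbc, hac, rfl⟩ := up3 hB hmin hwB hdeg
    obtain ⟨a', b', c', hab', hbc', hac', rfl⟩ := up3 hB hmin hwB' hdeg'
    rw [Gmap_Z hab hbc hac, Gmap_Z hab' hbc' hac'] at hG
    exact (inj_Z hB hmin hab hbc hac hab' hbc' hac' hwB hwB' hG.symm).symm
  · -- surjective
    intro T hT
    rw [Finset.mem_powersetCard] at hT
    obtain ⟨a, b, c, hab, hac, hbc, rfl⟩ := Finset.card_eq_three.mp hT.2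
    rcases zin hB hab hbc hac with hz | hz
    · refine ⟨Z a b c, Finset.mem_filter.mpr ⟨hz, moveDeg_Z hab hbc hac⟩, ?_⟩
      exact Gmap_Z hab hbc hac
    · refine ⟨Z a c b, Finset.mem_filter.mpr
        ⟨hz, moveDeg_Z hac (fun h => hbc h.symm) hab⟩, ?_⟩
      rw [Gmap_Z hac (fun h => hbc h.symm) hab]
      ext k
      simp only [Finset.mem_insert, Finset.mem_singleton]
      tauto
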